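/- Let q be a prime power and let m ≥ n > r ≥ 1 be integers. Then the number of matrices E ∈ F_q^{m×n} with rank E = r such that E^R has rank r is strictly greater than (1 − τ(q^{−1})) times the total number of rank-r matrices in F_q^{m×n}. Equivalently, a uniformly random rank-r matrix E ∈ F_q^{m×n} satisfies rank E^R = r with probability greater than 1 − τ(q^{−1}). -/

import Mathlib

/-- `τ(x) := min(0.72, 2.1·x)`. -/
noncomputable def tau (x : ℝ) : ℝ := min 0.72 (2.1 * x)

/-- The last `r` columns of a matrix (`A^R`). -/
def matR {F : Type*} {m n : ℕ} (r : ℕ) (hrn : r ≤ n) (A : Matrix (Fin m) (Fin n) F) :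
    Matrix (Fin m) (Fin r) F :=
  fun i j => A i ⟨n - r + j.1, by have := j.2; omega⟩

set_option linter.unusedSectionVars false

open Matrix Module

namespace Stmt10Aux



lemma prod_one_sub_ge (x : ℝ) (hx0 : 0 ≤ x) (hx : x ≤ 1/2) (a k : ℕ) :
    1 - ∑ j ∈ Finset.range k, x ^ (a + j + 1) ≤ ∏ j ∈ Finset.range k, (1 - x ^ (a + j + 1)) := by
  have h1 : ∀ j : ℕ, (0:ℝ) ≤ x ^ j := fun j => pow_nonneg hx0 j
  have h2 : ∀ j : ℕ, x ^ j ≤ 1 := fun j => pow_le_one₀ hx0 (by linarith)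
  induction k with
  | zero => simp
  | succ k ih =>
    rw [Finset.prod_range_succ, Finset.sum_range_succ]
    have h3 : 0 ≤ ∑ j ∈ Finset.range k, x ^ (a + j + 1) :=
      Finset.sum_nonneg fun j _ => h1 _
    have h4 : (1 - ∑ j ∈ Finset.range k, x ^ (a + j + 1)) * (1 - x ^ (a + k + 1)) ≤
        (∏ j ∈ Finset.range k, (1 - x ^ (a + j + 1))) * (1 - x ^ (a + k + 1)) :=
      mul_le_mul_of_nonneg_right ih (by linarith [h2 (a + k + 1)])
    nlinarith [mul_nonneg h3 (h1 (a + k + 1))]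

lemma tail_sum (x : ℝ) (hx0 : 0 ≤ x) (hx : x ≤ 1/2) (k : ℕ) :
    ∑ j ∈ Finset.range k, x ^ (3 + j + 1) ≤ 2 * x ^ 4 := by
  have h : ∑ j ∈ Finset.range k, x ^ (3 + j + 1) = x ^ 4 * ∑ j ∈ Finset.range k, x ^ j := by
    rw [Finset.mul_sum]
    refine Finset.sum_congr rfl fun j _ => ?_
    rw [← pow_add]
    congr 1
    omega
  have hge := geom_sum_mul x k
  have hS0 : 0 ≤ ∑ j ∈ Finset.range k, x ^ j := Finset.sum_nonneg fun j _ => pow_nonneg hx0 j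
  have hS2 : ∑ j ∈ Finset.range k, x ^ j ≤ 2 := by
    nlinarith [pow_nonneg hx0 k, mul_nonneg hS0 (by linarith : (0:ℝ) ≤ 1/2 - x)]
  calc ∑ j ∈ Finset.range k, x ^ (3 + j + 1) = x ^ 4 * ∑ j ∈ Finset.range k, x ^ j := h
    _ ≤ x ^ 4 * 2 := mul_le_mul_of_nonneg_left hS2 (pow_nonneg hx0 4)
    _ = 2 * x ^ 4 := by ring

lemma prod_ge_f (x : ℝ) (hx0 : 0 < x) (hx : x ≤ 1/2) (r : ℕ) (hr : 1 ≤ r) :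
    (1-x) * (1-x^2) * (1-x^3) * (1 - 2*x^4) ≤ ∏ j ∈ Finset.range r, (1 - x ^ (j + 1)) := by
  have h1 : ∀ j : ℕ, (0:ℝ) ≤ x ^ j := fun j => pow_nonneg hx0.le j
  have h2 : ∀ j : ℕ, x ^ j ≤ 1 := fun j => pow_le_one₀ hx0.le (by linarith)
  have hA : (0:ℝ) ≤ 1 - x := by linarith
  have hB : (0:ℝ) ≤ 1 - x^2 := by linarith [h2 2]
  have hC : (0:ℝ) ≤ 1 - x^3 := by linarith [h2 3]
  have hD : 1 - 2*x^4 ≤ 1 := by nlinarith [h1 4]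
  have hAB : (0:ℝ) ≤ (1-x)*(1-x^2) := mul_nonneg hA hB
  have hABC : (0:ℝ) ≤ (1-x)*(1-x^2)*(1-x^3) := mul_nonneg hAB hC
  rcases le_or_gt r 3 with h | h
  · interval_cases r
    · rw [Finset.prod_range_one]
      calc (1-x) * (1-x^2) * (1-x^3) * (1 - 2*x^4) ≤ (1-x) * (1-x^2) * (1-x^3) * 1 :=
            mul_le_mul_of_nonneg_left hD hABC
        _ = (1-x) * ((1-x^2) * (1-x^3)) := by ring
        _ ≤ (1-x) * 1 := mul_le_mul_of_nonneg_left (by nlinarith [h2 2, h2 3]) hA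
        _ = 1 - x ^ (0 + 1) := by ring_nf
    · rw [Finset.prod_range_succ, Finset.prod_range_one]
      calc (1-x) * (1-x^2) * (1-x^3) * (1 - 2*x^4) ≤ (1-x) * (1-x^2) * (1-x^3) * 1 :=
            mul_le_mul_of_nonneg_left hD hABC
        _ = (1-x) * (1-x^2) * (1-x^3) := by ring
        _ ≤ (1-x) * (1-x^2) * 1 := mul_le_mul_of_nonneg_left (by linarith [h1 3]) hAB
        _ = (1 - x ^ (0+1)) * (1 - x ^ (1+1)) := by ring_nf
    · rw [Finset.prod_range_succ, Finset.prod_range_succ, Finset.prod_range_one]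
      calc (1-x) * (1-x^2) * (1-x^3) * (1 - 2*x^4) ≤ (1-x) * (1-x^2) * (1-x^3) * 1 :=
            mul_le_mul_of_nonneg_left hD hABC
        _ = (1-x) * (1-x^2) * (1-x^3) := by ring
        _ = (1 - x ^ (0+1)) * (1 - x ^ (1+1)) * (1 - x ^ (2+1)) := by ring_nf
  · have hr4 : r = 3 + (r - 3) := by omega
    rw [hr4, Finset.prod_range_add]
    have hhead : ∏ j ∈ Finset.range 3, (1 - x^(j+1)) = (1-x)*(1-x^2)*(1-x^3) := by
      rw [Finset.prod_range_succ, Finset.prod_range_succ, Finset.prod_range_one]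
      ring_nf
    rw [hhead]
    have htail : 1 - 2*x^4 ≤ ∏ j ∈ Finset.range (r-3), (1 - x^(3+j+1)) :=
      le_trans (by linarith [tail_sum x hx0.le hx (r-3)])
        (prod_one_sub_ge x hx0.le hx 3 (r-3))
    exact mul_le_mul_of_nonneg_left htail hABC

lemma f_ge_one_sub_tau (x : ℝ) (hx0 : 0 < x) (hx : x ≤ 1/2) :
    1 - tau x ≤ (1-x) * (1-x^2) * (1-x^3) * (1 - 2*x^4) := by
  have hA : (1/2:ℝ) ≤ 1 - x := by linarith
  have hB : (3/4:ℝ) ≤ 1 - x^2 := by nlinarith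
  have hC : (7/8:ℝ) ≤ 1 - x^3 := by nlinarith
  have hD : (7/8:ℝ) ≤ 1 - 2*x^4 := by nlinarith [pow_le_pow_left₀ hx0.le hx 4]
  rw [tau]
  rcases le_total (0.72 : ℝ) (2.1 * x) with h | h
  · rw [min_eq_left h]
    have p1 : (1/2:ℝ)*(3/4) ≤ (1-x)*(1-x^2) := by nlinarith
    have p2 : (1/2:ℝ)*(3/4)*(7/8) ≤ (1-x)*(1-x^2)*(1-x^3) := by nlinarith
    have p3 : (1/2:ℝ)*(3/4)*(7/8)*(7/8) ≤ (1-x)*(1-x^2)*(1-x^3)*(1-2*x^4) := by nlinarith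
    norm_num at p3 ⊢
    linarith
  · rw [min_eq_right h]
    have e3 : x^3 ≤ 1/8 := by nlinarith [pow_le_pow_left₀ hx0.le hx 3]
    have e7 : x^7 ≤ 1/128 := by nlinarith [pow_le_pow_left₀ hx0.le hx 7]
    have e8 : x^8 ≤ 1/256 := by nlinarith [pow_le_pow_left₀ hx0.le hx 8]
    nlinarith [mul_le_mul_of_nonneg_left e3 hx0.le, mul_le_mul_of_nonneg_left e7 hx0.le,
      mul_le_mul_of_nonneg_left e8 hx0.le, pow_nonneg hx0.le 5, pow_nonneg hx0.le 6,
      pow_nonneg hx0.le 10, sq_nonneg x]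



lemma key_real (Q : ℝ) (hQ : 2 ≤ Q) {n r : ℕ} (hrn : r < n) (hr : 1 ≤ r) :
    (1 - tau Q⁻¹) * ∏ i ∈ Finset.range r, (Q^n - Q^i) <
      Q^(r*(n-r)) * ∏ i ∈ Finset.range r, (Q^r - Q^i) := by
  have hQ0 : (0:ℝ) < Q := by linarith
  have hQ1 : (1:ℝ) < Q := by linarith
  set x := Q⁻¹ with hxdef
  have hx0 : 0 < x := inv_pos.2 hQ0
  have hx : x ≤ 1/2 := by
    rw [hxdef, show (1:ℝ)/2 = 2⁻¹ by norm_num]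
    exact inv_anti₀ (by norm_num) hQ
  have htau : 0 < 1 - tau x := by
    simp only [tau]
    have := min_le_left (0.72 : ℝ) (2.1 * x)
    linarith
  -- step 1
  have hstep1 : ∏ i ∈ Finset.range r, (Q^n - Q^i) < (Q^n)^r := by
    have : (Q^n)^r = ∏ _i ∈ Finset.range r, Q^n := by
      rw [Finset.prod_const, Finset.card_range]
    rw [this]
    refine Finset.prod_lt_prod_of_nonempty ?_ ?_ (Finset.nonempty_range_iff.2 (by omega))
    · intro i hi
      have : Q^i < Q^n := pow_lt_pow_right₀ hQ1 (by have := Finset.mem_range.1 hi; omega)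
      linarith
    · intro i hi
      have : (0:ℝ) < Q^i := pow_pos hQ0 i
      linarith
  -- factor identity
  have hfact : ∀ i ∈ Finset.range r, Q^(n-r) * (Q^r - Q^i) = Q^n * (1 - x^(r-i)) := by
    intro i hi
    have hi' := Finset.mem_range.1 hi
    have e1 : Q^(n-r) * Q^r = Q^n := by rw [← pow_add]; congr 1; omega
    have e2 : Q^(n-r+i) * Q^(r-i) = Q^n := by rw [← pow_add]; congr 1; omega
    have e3 : Q^(n-r) * Q^i = Q^(n-r+i) := by rw [← pow_add]
    have e4 : Q^n * x^(r-i) = Q^(n-r+i) := by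
      have hne : (Q:ℝ)^(r-i) ≠ 0 := pow_ne_zero _ hQ0.ne'
      rw [hxdef, inv_pow]
      field_simp
      linarith [e2]
    rw [mul_sub, e1, e3, mul_sub, mul_one, e4]
  -- step 2
  have hstep2 : (1 - tau x) * (Q^n)^r ≤ Q^(r*(n-r)) * ∏ i ∈ Finset.range r, (Q^r - Q^i) := by
    have hrw : Q^(r*(n-r)) * ∏ i ∈ Finset.range r, (Q^r - Q^i) =
        (Q^n)^r * ∏ j ∈ Finset.range r, (1 - x^(j+1)) := by
      have c1 : Q^(r*(n-r)) = ∏ _i ∈ Finset.range r, Q^(n-r) := by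
        rw [Finset.prod_const, Finset.card_range, ← pow_mul, mul_comm (n-r) r]
      have c2 : ((Q:ℝ)^n)^r = ∏ _i ∈ Finset.range r, (Q:ℝ)^n := by
        rw [Finset.prod_const, Finset.card_range]
      rw [c1, ← Finset.prod_mul_distrib, Finset.prod_congr rfl hfact,
        Finset.prod_mul_distrib, ← c2]
      congr 1
      rw [← Finset.prod_range_reflect (fun j => 1 - x^(j+1)) r]
      refine Finset.prod_congr rfl fun i hi => ?_
      have := Finset.mem_range.1 hi
      congr 2
      omega
    rw [hrw, mul_comm ((Q^n)^r) _]
    exact mul_le_mul_of_nonneg_right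
      ((f_ge_one_sub_tau x hx0 hx).trans (prod_ge_f x hx0 hx r hr))
      (pow_nonneg (pow_nonneg hQ0.le n) r)
  calc (1 - tau x) * ∏ i ∈ Finset.range r, (Q^n - Q^i)
      < (1 - tau x) * (Q^n)^r := by
        exact mul_lt_mul_of_pos_left hstep1 htau
    _ ≤ Q^(r*(n-r)) * ∏ i ∈ Finset.range r, (Q^r - Q^i) := hstep2



variable {F : Type*} [Field F] {m n r : ℕ}

abbrev RSub (F : Type*) [Field F] (m r : ℕ) := {W : Submodule F (Fin m → F) // finrank F W = r}

noncomputable def bW (W : RSub F m r) : Basis (Fin r) F W.1 :=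
  Module.finBasisOfFinrankEq F W.1 W.2

noncomputable def basM (W : RSub F m r) : Matrix (Fin m) (Fin r) F :=
  Matrix.of fun i j => (bW W j : Fin m → F) i

lemma basM_mulVecLin (W : RSub F m r) :
    (basM W).mulVecLin = W.1.subtype ∘ₗ ((bW W).equivFun.symm : (Fin r → F) →ₗ[F] W.1) := by
  ext x i
  simp only [Matrix.mulVecLin_apply, LinearMap.comp_apply, LinearEquiv.coe_coe,
    Basis.equivFun_symm_apply, Submodule.coe_subtype]
  rw [Submodule.coe_sum]
  simp only [Finset.sum_apply, SetLike.val_smul, Pi.smul_apply, smul_eq_mul]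
  simp [Matrix.mulVec, dotProduct, basM, mul_comm, Pi.single_apply]

lemma basM_injective (W : RSub F m r) : Function.Injective (basM W).mulVecLin := by
  rw [basM_mulVecLin]
  exact Subtype.val_injective.comp (bW W).equivFun.symm.injective

lemma basM_range (W : RSub F m r) : LinearMap.range (basM W).mulVecLin = W.1 := by
  rw [basM_mulVecLin, LinearMap.range_comp, LinearEquiv.range, Submodule.map_top,
    Submodule.range_subtype]

lemma rank_basM_mul {k : ℕ} (W : RSub F m r) (C : Matrix (Fin r) (Fin k) F) :
    (basM W * C).rank = C.rank := by
  rw [Matrix.rank, Matrix.rank, Matrix.mulVecLin_mul, LinearMap.range_comp]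
  exact (Submodule.equivMapOfInjective _ (basM_injective W) _).symm.finrank_eq

lemma range_basM_mul (W : RSub F m r) (C : Matrix (Fin r) (Fin n) F) (hC : C.rank = r) :
    LinearMap.range (basM W * C).mulVecLin = W.1 := by
  rw [Matrix.mulVecLin_mul, LinearMap.range_comp]
  have : LinearMap.range C.mulVecLin = ⊤ := by
    apply Submodule.eq_top_of_finrank_eq
    rw [← Matrix.rank, hC]
    simp [Module.finrank_fintype_fun_eq_card]
  rw [this, Submodule.map_top, basM_range]

/-- coordinates of the columns of `E` w.r.t. the chosen basis of `W`. -/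
noncomputable def coordM (W : RSub F m r) (E : Matrix (Fin m) (Fin n) F)
    (hE : ∀ j, (fun k => E k j) ∈ W.1) : Matrix (Fin r) (Fin n) F :=
  Matrix.of fun i j => (bW W).repr ⟨_, hE j⟩ i

lemma basM_mul_coordM (W : RSub F m r) (E : Matrix (Fin m) (Fin n) F)
    (hE : ∀ j, (fun k => E k j) ∈ W.1) : basM W * coordM W E hE = E := by
  ext i j
  have h : ((∑ k, ((bW W).repr ⟨_, hE j⟩) k • bW W k : W.1) : Fin m → F) i = E i j := by
    rw [(bW W).sum_repr ⟨_, hE j⟩]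
  rw [Submodule.coe_sum] at h
  simp only [Finset.sum_apply, SetLike.val_smul, Pi.smul_apply, smul_eq_mul] at h
  simpa [Matrix.mul_apply, basM, coordM, mul_comm] using h

lemma col_mem_range (E : Matrix (Fin m) (Fin n) F) (j : Fin n) :
    (fun k => E k j) ∈ LinearMap.range E.mulVecLin :=
  ⟨Pi.single j 1, by classical rw [Matrix.mulVecLin_apply, Matrix.mulVec_single_one]; rfl⟩

lemma coordM_unique (W W' : RSub F m r) (hWW : W' = W) (C : Matrix (Fin r) (Fin n) F)
    (h : ∀ j, (fun k => (basM W * C) k j) ∈ W'.1) : coordM W' (basM W * C) h = C := by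
  subst hWW
  ext i j
  have hx : (⟨_, h j⟩ : W'.1) = ∑ k, C k j • bW W' k := by
    apply Subtype.ext
    rw [Submodule.coe_sum]
    funext i'
    simp only [Finset.sum_apply, SetLike.val_smul, Pi.smul_apply, smul_eq_mul]
    simp [Matrix.mul_apply, basM, mul_comm]
  simp only [coordM, Matrix.of_apply, hx]
  rw [Basis.repr_sum_self]

variable (F m n r) in
/-- The key factorization equivalence. -/
noncomputable def Phi :
    {E : Matrix (Fin m) (Fin n) F // E.rank = r} ≃
      RSub F m r × {C : Matrix (Fin r) (Fin n) F // C.rank = r} where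
  toFun E :=
    ⟨⟨LinearMap.range E.1.mulVecLin, E.2⟩,
      ⟨coordM ⟨LinearMap.range E.1.mulVecLin, E.2⟩ E.1 (col_mem_range E.1), by
        rw [← rank_basM_mul ⟨LinearMap.range E.1.mulVecLin, E.2⟩, basM_mul_coordM]
        exact E.2⟩⟩
  invFun y := ⟨basM y.1 * y.2.1, by rw [rank_basM_mul]; exact y.2.2⟩
  left_inv E := Subtype.ext (basM_mul_coordM _ _ _)
  right_inv := by
    rintro ⟨W, C, hC⟩
    have hE : (basM W * C).rank = r := by rw [rank_basM_mul]; exact hC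
    have h1 : (⟨LinearMap.range (basM W * C).mulVecLin, hE⟩ : RSub F m r) = W :=
      Subtype.ext (range_basM_mul W C hC)
    exact Prod.ext h1 (Subtype.ext (coordM_unique W _ h1 C _))

lemma matR_mul {k : ℕ} (h : r ≤ n) (A : Matrix (Fin m) (Fin k) F) (C : Matrix (Fin k) (Fin n) F) :
    matR r h (A * C) = A * matR r h C := rfl

lemma rank_eq_of_matR (h : r ≤ n) {C : Matrix (Fin r) (Fin n) F} (hC : (matR r h C).rank = r) :
    C.rank = r := by
  refine le_antisymm (le_trans C.rank_le_card_height (by simp)) ?_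
  have key : matR r h C = C * (Matrix.of fun (k : Fin n) (j : Fin r) =>
      if k = (⟨n - r + j.1, by have := j.2; omega⟩ : Fin n) then (1 : F) else 0) := by
    ext i j
    rw [Matrix.mul_apply]
    simp [Finset.sum_ite_eq', matR]
  calc r = (matR r h C).rank := hC.symm
    _ ≤ C.rank := by rw [key]; exact Matrix.rank_mul_le_left _ _

/-- glue a left block and a right block -/
def glue (h : r ≤ n) (D : Matrix (Fin r) (Fin (n - r)) F) (U : Matrix (Fin r) (Fin r) F) :
    Matrix (Fin r) (Fin n) F :=
  Matrix.of fun i j =>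
    if hj : j.1 < n - r then D i ⟨j.1, hj⟩ else U i ⟨j.1 - (n - r), by have := j.2; omega⟩

lemma matR_glue (h : r ≤ n) (D : Matrix (Fin r) (Fin (n - r)) F)
    (U : Matrix (Fin r) (Fin r) F) : matR r h (glue h D U) = U := by
  ext i j
  have hj := j.2
  show glue h D U i ⟨n - r + j.1, _⟩ = U i j
  rw [glue, Matrix.of_apply, dif_neg (show ¬(n - r + j.1 < n - r) by omega)]
  congr 1
  exact Fin.ext (show n - r + j.1 - (n - r) = j.1 by omega)

lemma glueL (h : r ≤ n) (D : Matrix (Fin r) (Fin (n - r)) F) (U : Matrix (Fin r) (Fin r) F)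
    (i : Fin r) (j : Fin (n - r)) : glue h D U i ⟨j.1, by have := j.2; omega⟩ = D i j := by
  rw [glue, Matrix.of_apply, dif_pos j.2]

lemma glue_eta (h : r ≤ n) (C : Matrix (Fin r) (Fin n) F) :
    glue h (Matrix.of fun i j => C i ⟨j.1, by have := j.2; omega⟩) (matR r h C) = C := by
  ext i j
  rw [glue, Matrix.of_apply]
  rcases lt_or_ge j.1 (n - r) with hj | hj
  · rw [dif_pos hj]
    exact congrArg (C i) (Fin.ext rfl)
  · rw [dif_neg (not_lt.2 hj)]
    show C i ⟨n - r + (j.1 - (n - r)), _⟩ = C i j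
    congr 1
    exact Fin.ext (show n - r + (j.1 - (n - r)) = j.1 by omega)

variable (F) in
def splitEquiv (h : r ≤ n) :
    {C : Matrix (Fin r) (Fin n) F // (matR r h C).rank = r} ≃
      Matrix (Fin r) (Fin (n - r)) F × {U : Matrix (Fin r) (Fin r) F // U.rank = r} where
  toFun C := (Matrix.of fun i j => C.1 i ⟨j.1, by have := j.2; omega⟩, ⟨matR r h C.1, C.2⟩)
  invFun z := ⟨glue h z.1 z.2.1, by rw [matR_glue]; exact z.2.2⟩
  left_inv C := Subtype.ext (glue_eta h C.1)
  right_inv z := by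
    refine Prod.ext ?_ (Subtype.ext (matR_glue h z.1 z.2.1))
    ext i j
    exact glueL h z.1 z.2.1 i j


variable {F : Type*} [Field F] {m n r : ℕ}

lemma rank_eq_iff_li (C : Matrix (Fin r) (Fin n) F) : C.rank = r ↔ LinearIndependent F C := by
  constructor
  · intro hC
    refine linearIndependent_iff_card_eq_finrank_span.2 ?_; rw [Fintype.card_fin]
    show r = finrank F (Submodule.span F (Set.range C.row))
    rw [← rank_eq_finrank_span_row, hC]
  · intro h; simpa using h.rank_matrix

lemma card_rank_eq [Fintype F] (hrn : r ≤ n) :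
    Nat.card {C : Matrix (Fin r) (Fin n) F // C.rank = r} =
      ∏ i ∈ Finset.range r, (Fintype.card F ^ n - Fintype.card F ^ i) := by
  have e : {C : Matrix (Fin r) (Fin n) F // C.rank = r} ≃
      {s : Fin r → (Fin n → F) // LinearIndependent F s} :=
    Equiv.subtypeEquiv (Matrix.of).symm (fun C => rank_eq_iff_li C)
  rw [Nat.card_congr e,
    card_linearIndependent (by simpa [Module.finrank_fintype_fun_eq_card] using hrn : r ≤ finrank F (Fin n → F))]
  simp only [Module.finrank_fintype_fun_eq_card, Fintype.card_fin]
  exact Fin.prod_univ_eq_prod_range (fun i => Fintype.card F ^ n - Fintype.card F ^ i) r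

lemma card_matrix_fin [Fintype F] (a b : ℕ) :
    Nat.card (Matrix (Fin a) (Fin b) F) = Fintype.card F ^ (a * b) := by
  rw [Nat.card_congr (Matrix.of : (Fin a → Fin b → F) ≃ _).symm, Nat.card_fun, Nat.card_fun,
    Nat.card_eq_fintype_card (α := F), Nat.card_eq_fintype_card, Nat.card_eq_fintype_card,
    Fintype.card_fin, Fintype.card_fin, ← pow_mul, mul_comm b a]


lemma rsub_pos [Fintype F] (hrm : r ≤ m) :
    0 < Nat.card {W : Submodule F (Fin m → F) // finrank F W = r} := by
  have : Finite (Submodule F (Fin m → F)) :=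
    Finite.of_injective (fun W => (W : Set (Fin m → F))) SetLike.coe_injective
  have : Nonempty {W : Submodule F (Fin m → F) // finrank F W = r} := by
    have hli : LinearIndependent F
        (fun i : Fin r => (Pi.single (Fin.castLE hrm i) 1 : Fin m → F)) := by
      have := (Pi.basisFun F (Fin m)).linearIndependent.comp (Fin.castLE hrm)
        (Fin.castLE_injective hrm)
      simpa [Function.comp_def, Pi.basisFun_apply] using this
    exact ⟨⟨Submodule.span F (Set.range fun i : Fin r => (Pi.single (Fin.castLE hrm i) 1 : Fin m → F)),
      by rw [finrank_span_eq_card hli, Fintype.card_fin]⟩⟩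
  exact Nat.card_pos


variable {F : Type*} [Field F] {m n r : ℕ}

variable (F m n r) in
noncomputable def goodEquiv (h : r ≤ n) :
    {E : Matrix (Fin m) (Fin n) F // E.rank = r ∧ (matR r h E).rank = r} ≃
      RSub F m r × {C : Matrix (Fin r) (Fin n) F // (matR r h C).rank = r} where
  toFun E :=
    ⟨(Phi F m n r ⟨E.1, E.2.1⟩).1,
     ⟨(Phi F m n r ⟨E.1, E.2.1⟩).2.1, by
        have hx : basM (Phi F m n r ⟨E.1, E.2.1⟩).1 * (Phi F m n r ⟨E.1, E.2.1⟩).2.1 = E.1 :=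
          congrArg Subtype.val ((Phi F m n r).symm_apply_apply ⟨E.1, E.2.1⟩)
        have h2 := E.2.2
        rw [← hx, matR_mul, rank_basM_mul] at h2
        exact h2⟩⟩
  invFun y := ⟨basM y.1 * y.2.1, by
      have hC : y.2.1.rank = r := rank_eq_of_matR h y.2.2
      refine ⟨by rw [rank_basM_mul]; exact hC, ?_⟩
      rw [matR_mul, rank_basM_mul]; exact y.2.2⟩
  left_inv E := by
    apply Subtype.ext
    have := congrArg Subtype.val ((Phi F m n r).symm_apply_apply ⟨E.1, E.2.1⟩)
    exact this
  right_inv y := by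
    obtain ⟨W, C, hC⟩ := y
    have hC' : C.rank = r := rank_eq_of_matR h hC
    have h4 : Phi F m n r ⟨basM W * C, by rw [rank_basM_mul]; exact hC'⟩ = (W, ⟨C, hC'⟩) :=
      (Phi F m n r).apply_symm_apply (W, ⟨C, hC'⟩)
    have h5 := congrArg Prod.fst h4
    have h6 := congrArg
      (fun t : RSub F m r × {C : Matrix (Fin r) (Fin n) F // C.rank = r} => t.2.1) h4
    exact Prod.ext h5 (Subtype.ext h6)

end Stmt10Aux

open Stmt10Aux

/-- Let `F` be a finite field of cardinality `q`, and `m ≥ n > r ≥ 1`.  Then the number of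
`E ∈ F^{m×n}` with `rank E = r` and `rank E^R = r` is strictly greater than
`(1 − τ(q^{−1}))` times the total number of rank-`r` matrices in `F^{m×n}`. -/
theorem stmt10 (F : Type*) [Field F] [Fintype F] (m n r : ℕ)
    (hnm : n ≤ m) (hrn : r < n) (hr : 1 ≤ r) :
    (1 - tau (Fintype.card F : ℝ)⁻¹) *
        (Nat.card {E : Matrix (Fin m) (Fin n) F // E.rank = r} : ℝ) <
      (Nat.card {E : Matrix (Fin m) (Fin n) F //
          E.rank = r ∧ (matR r hrn.le E).rank = r} : ℝ) := by
  classical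
  have hq : 2 ≤ Fintype.card F := Fintype.one_lt_card
  set q := Fintype.card F with hqdef
  have hTot : Nat.card {E : Matrix (Fin m) (Fin n) F // E.rank = r} =
      Nat.card (RSub F m r) * ∏ i ∈ Finset.range r, (q^n - q^i) := by
    rw [Nat.card_congr (Phi F m n r), Nat.card_prod, card_rank_eq hrn.le]
  have hGood : Nat.card {E : Matrix (Fin m) (Fin n) F //
        E.rank = r ∧ (matR r hrn.le E).rank = r} =
      Nat.card (RSub F m r) * (q^(r*(n-r)) * ∏ i ∈ Finset.range r, (q^r - q^i)) := by
    rw [Nat.card_congr (goodEquiv F m n r hrn.le), Nat.card_prod,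
      Nat.card_congr (splitEquiv F hrn.le), Nat.card_prod, card_matrix_fin,
      card_rank_eq le_rfl]
  rw [hTot, hGood]
  have hS : 0 < Nat.card (RSub F m r) := rsub_pos (le_trans hrn.le hnm)
  have hc1 : ((∏ i ∈ Finset.range r, (q^n - q^i) : ℕ) : ℝ)
      = ∏ i ∈ Finset.range r, ((q:ℝ)^n - (q:ℝ)^i) := by
    rw [Nat.cast_prod]
    refine Finset.prod_congr rfl fun i hi => ?_
    have hle : q^i ≤ q^n :=
      Nat.pow_le_pow_right (by omega) (by have := Finset.mem_range.1 hi; omega)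
    rw [Nat.cast_sub hle, Nat.cast_pow, Nat.cast_pow]
  have hc2 : ((∏ i ∈ Finset.range r, (q^r - q^i) : ℕ) : ℝ)
      = ∏ i ∈ Finset.range r, ((q:ℝ)^r - (q:ℝ)^i) := by
    rw [Nat.cast_prod]
    refine Finset.prod_congr rfl fun i hi => ?_
    have hle : q^i ≤ q^r :=
      Nat.pow_le_pow_right (by omega) (by have := Finset.mem_range.1 hi; omega)
    rw [Nat.cast_sub hle, Nat.cast_pow, Nat.cast_pow]
  have hkey := key_real (q:ℝ) (by exact_mod_cast hq) hrn hr
  have hSR : (0:ℝ) < (Nat.card (RSub F m r) : ℝ) := by exact_mod_cast hS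
  rw [Nat.cast_mul, Nat.cast_mul, hc1, Nat.cast_mul, hc2, Nat.cast_pow]
  calc (1 - tau ((q:ℝ))⁻¹) *
        ((Nat.card (RSub F m r) : ℝ) * ∏ i ∈ Finset.range r, ((q:ℝ)^n - (q:ℝ)^i))
      = (Nat.card (RSub F m r) : ℝ) *
        ((1 - tau ((q:ℝ))⁻¹) * ∏ i ∈ Finset.range r, ((q:ℝ)^n - (q:ℝ)^i)) := by ring
    _ < (Nat.card (RSub F m r) : ℝ) *
        ((q:ℝ)^(r*(n-r)) * ∏ i ∈ Finset.range r, ((q:ℝ)^r - (q:ℝ)^i)) :=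
        mul_lt_mul_of_pos_left hkey hSR
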